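/- arXiv:1106.0435 — 7 statements merged into one kernel-verified Lean document; each statement's English description precedes it below -/
import Mathlib

section
/- Closure of the third potential for cH_V: let u ≠ v and set u₂ = (p-q)/(u-v) - v, v₁ = (p-q)/(u-v) - u. Then (u₂³ - 3p·u₂) - (u³ - 3p·u) = (v₁³ - 3q·v₁) - (v³ - 3q·v). -/
theorem cHV_third_potential_closure (p q u v : ℂ) (huv : u ≠ v)
    (u₂ v₁ : ℂ) (hu₂ : u₂ = (p - q) / (u - v) - v) (hv₁ : v₁ = (p - q) / (u - v) - u) :
    (u₂ ^ 3 - 3 * p * u₂) - (u ^ 3 - 3 * p * u) = (v₁ ^ 3 - 3 * q * v₁) - (v ^ 3 - 3 * q * v) := by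
  have h : u - v ≠ 0 := sub_ne_zero.mpr huv
  subst hu₂ hv₁
  field_simp
  ring
end

section
/- Miura-type transformation from lpKdV to G1: suppose x : ℤ² → ℂ satisfies (x₁₂ - x)(x₁ - x₂) = p - q at a given square with x₁ ≠ x₂, and z satisfies z₁ + z = (x₁-x)² - p and z₂ + z = (x₂-x)² - q as well as z₁₂ + z₁ = (x₁₂-x₁)² - q and z₁₂ + z₂ = (x₁₂-x₂)² - p. Then z₁₂ = z + (p-q)·(z₂ - z₁)/(u - v)² where u = x₁ - x and v = x₂ - x. -/
theorem miura_lpKdV_to_G1 (p q x x₁ x₂ x₁₂ z z₁ z₂ z₁₂ : ℂ)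
    (hKdV : (x₁₂ - x) * (x₁ - x₂) = p - q) (hx : x₁ ≠ x₂)
    (h1 : z₁ + z = (x₁ - x) ^ 2 - p) (h2 : z₂ + z = (x₂ - x) ^ 2 - q)
    (h3 : z₁₂ + z₁ = (x₁₂ - x₁) ^ 2 - q) (h4 : z₁₂ + z₂ = (x₁₂ - x₂) ^ 2 - p)
    (u v : ℂ) (hu : u = x₁ - x) (hv : v = x₂ - x) :
    z₁₂ = z + (p - q) * (z₂ - z₁) / (u - v) ^ 2 := by
  have hd : x₁ - x₂ ≠ 0 := sub_ne_zero.mpr hx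
  subst hu hv
  have huv : (x₁ - x) - (x₂ - x) = x₁ - x₂ := by ring
  rw [huv]
  field_simp
  linear_combination (x₁-x₂)^2*(h3-h1) - (p-q)*(h2-h1) +
    ((x₁₂-2*x₁+x)*(x₁-x₂)+(p-q))*hKdV
end

section
/- Miura-type transformation from lpKdV to F1: suppose x : ℤ² → ℂ satisfies (x₁₂ - x)(x₁ - x₂) = p - q at a given square with x₁ ≠ x₂, and f satisfies f₁ - f = (x₁-x)³ - 3p(x₁-x), f₂ - f = (x₂-x)³ - 3q(x₂-x), f₁₂ - f₁ = (x₁₂-x₁)³ - 3q(x₁₂-x₁), f₁₂ - f₂ = (x₁₂-x₂)³ - 3p(x₁₂-x₂). Then f₁₂ = f + (p-q)·[ v - u + (f₁ - f₂)/(u-v)² + (p-q)²/(u-v)³ ] where u = x₁ - x and v = x₂ - x. -/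
theorem miura_lpKdV_to_F1 (p q x x₁ x₂ x₁₂ f f₁ f₂ f₁₂ : ℂ)
    (hKdV : (x₁₂ - x) * (x₁ - x₂) = p - q) (hx : x₁ ≠ x₂)
    (h1 : f₁ - f = (x₁ - x) ^ 3 - 3 * p * (x₁ - x))
    (h2 : f₂ - f = (x₂ - x) ^ 3 - 3 * q * (x₂ - x))
    (h3 : f₁₂ - f₁ = (x₁₂ - x₁) ^ 3 - 3 * q * (x₁₂ - x₁))
    (h4 : f₁₂ - f₂ = (x₁₂ - x₂) ^ 3 - 3 * p * (x₁₂ - x₂))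
    (u v : ℂ) (hu : u = x₁ - x) (hv : v = x₂ - x) :
    f₁₂ = f + (p - q) * (v - u + (f₁ - f₂) / (u - v) ^ 2 + (p - q) ^ 2 / (u - v) ^ 3) := by
  subst hu hv
  have hd : x₁ - x₂ ≠ 0 := sub_ne_zero.mpr hx
  have hx12 : x₁₂ = x + (p - q) / (x₁ - x₂) := by
    field_simp
    linear_combination hKdV
  have hf1 : f₁ = f + ((x₁ - x) ^ 3 - 3 * p * (x₁ - x)) := by linear_combination h1
  have hf2 : f₂ = f + ((x₂ - x) ^ 3 - 3 * q * (x₂ - x)) := by linear_combination h2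
  have hf12 : f₁₂ = f₁ + ((x₁₂ - x₁) ^ 3 - 3 * q * (x₁₂ - x₁)) := by linear_combination h3
  have huv : x₁ - x - (x₂ - x) = x₁ - x₂ := by ring
  rw [huv, hf12, hx12, hf1, hf2]
  field_simp
  ring
end

section
/- The map F_IV is involutive: let p, q, u, v ∈ ℂ with u ≠ v, u ≠ 0, v ≠ 0, and define U = v·(1 + (p-q)/(u-v)) and V = u·(1 + (p-q)/(u-v)). Assume U ≠ V. Then V·(1 + (p-q)/(U-V)) = u and U·(1 + (p-q)/(U-V)) = v. -/
theorem FIV_involutive (p q u v : ℂ) (huv : u ≠ v) (hu : u ≠ 0) (hv : v ≠ 0)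
    (U V : ℂ) (hU : U = v * (1 + (p - q) / (u - v))) (hV : V = u * (1 + (p - q) / (u - v)))
    (hUV : U ≠ V) :
    V * (1 + (p - q) / (U - V)) = u ∧ U * (1 + (p - q) / (U - V)) = v := by
  have hd : u - v ≠ 0 := sub_ne_zero.mpr huv
  set s := 1 + (p - q) / (u - v) with hs
  have hsne : s ≠ 0 := by
    intro h
    apply hUV
    rw [hU, hV, h, mul_zero, mul_zero]
  have hdiff : U - V = (v - u) * s := by rw [hU, hV]; ring
  have hsval : (p - q) = (s - 1) * (u - v) := by
    rw [hs, add_sub_cancel_left, div_mul_cancel₀ _ hd]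
  have key : 1 + (p - q) / (U - V) = 1 / s := by
    rw [hdiff, hsval]
    have hvu : v - u ≠ 0 := fun h => hd (by linear_combination -h)
    field_simp
    exact (by ring)
  constructor
  · rw [key, hV]; field_simp
  · rw [key, hU]; field_simp
end

section
/- The multiplicative substitution links lpKdV to F_IV: suppose x, x₁, x₂, x₁₂ ∈ ℂ satisfy (x₁₂ - x)(x₁ - x₂) = p - q, with x ≠ 0, x₁ ≠ x₂, and x(x₁ - x₂) ≠ 0. Set u = x₁·x, v = x₂·x, u₂ = x₁₂·x₂, v₁ = x₁₂·x₁. Then u ≠ v and u₂ = v·(1 + (p-q)/(u-v)), v₁ = u·(1 + (p-q)/(u-v)). -/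
theorem mult_subst_lpKdV_to_FIV (p q x x₁ x₂ x₁₂ : ℂ)
    (hKdV : (x₁₂ - x) * (x₁ - x₂) = p - q) (hx0 : x ≠ 0) (hx : x₁ ≠ x₂)
    (hxx : x * (x₁ - x₂) ≠ 0)
    (u v u₂ v₁ : ℂ) (hu : u = x₁ * x) (hv : v = x₂ * x)
    (hu₂ : u₂ = x₁₂ * x₂) (hv₁ : v₁ = x₁₂ * x₁) :
    u ≠ v ∧ u₂ = v * (1 + (p - q) / (u - v)) ∧ v₁ = u * (1 + (p - q) / (u - v)) := by
  subst hu hv hu₂ hv₁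
  have huv : x₁ * x - x₂ * x ≠ 0 := by
    rw [← sub_mul]; exact fun h => hxx (by rw [mul_comm]; exact h)
  refine ⟨sub_ne_zero.mp huv, ?_, ?_⟩
  · field_simp
    linear_combination x₂ * hKdV
  · field_simp
    linear_combination x₁ * hKdV
end

section
/- 3D consistency of the idea system I_V on a cube: let u¹, u², u³ ∈ ℂ be edge values and p¹, p², p³ ∈ ℂ parameters with all three differences uⁱ - uʲ (i ≠ j) nonzero, and define the shifted values by uⁱ_j = (pⁱ - pʲ)/(uⁱ - uʲ) - uʲ for i ≠ j. Assume additionally the shifted differences uⁱ_k - uʲ_k are nonzero. Then the doubly shifted values are consistent: uⁱ_{jk} = uⁱ_{kj} for all distinct i, j, k, where uⁱ_{jk} = (pⁱ - pʲ)/(uⁱ_k - uʲ_k) - uʲ_k. -/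
set_option maxHeartbeats 4000000 in
private lemma IV_key (p1 p2 p3 u1 u2 u3 : ℂ)
    (h13 : u1 ≠ u3) (h23 : u2 ≠ u3) (h12' : u1 ≠ u2) (h32' : u3 ≠ u2)
    (h12s : (p1 - p3) / (u1 - u3) - u3 ≠ (p2 - p3) / (u2 - u3) - u3)
    (h13s : (p1 - p2) / (u1 - u2) - u2 ≠ (p3 - p2) / (u3 - u2) - u2) :
    (p1 - p2) / (((p1 - p3) / (u1 - u3) - u3) - ((p2 - p3) / (u2 - u3) - u3)) - ((p2 - p3) / (u2 - u3) - u3) =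
    (p1 - p3) / (((p1 - p2) / (u1 - u2) - u2) - ((p3 - p2) / (u3 - u2) - u2)) - ((p3 - p2) / (u3 - u2) - u2) := by
  have d12 : u1 - u2 ≠ 0 := sub_ne_zero.mpr h12'
  have d13 : u1 - u3 ≠ 0 := sub_ne_zero.mpr h13
  have d23 : u2 - u3 ≠ 0 := sub_ne_zero.mpr h23
  have d32 : u3 - u2 ≠ 0 := sub_ne_zero.mpr h32'
  have s12 : ((p1 - p3) / (u1 - u3) - u3) - ((p2 - p3) / (u2 - u3) - u3) ≠ 0 := sub_ne_zero.mpr h12s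
  have s13 : ((p1 - p2) / (u1 - u2) - u2) - ((p3 - p2) / (u3 - u2) - u2) ≠ 0 := sub_ne_zero.mpr h13s
  have s12' : (p1 - p3) * (u2 - u3) - (p2 - p3) * (u1 - u3) ≠ 0 := by
    intro h; apply s12
    field_simp
    linear_combination h
  have s13' : (p1 - p2) * (u3 - u2) - (p3 - p2) * (u1 - u2) ≠ 0 := by
    intro h; apply s13
    field_simp
    linear_combination h
  have e12 : ((p1 - p3) / (u1 - u3) - u3) - ((p2 - p3) / (u2 - u3) - u3)
      = ((p1 - p3) * (u2 - u3) - (p2 - p3) * (u1 - u3)) / ((u1 - u3) * (u2 - u3)) := by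
    field_simp; ring
  have e13 : ((p1 - p2) / (u1 - u2) - u2) - ((p3 - p2) / (u3 - u2) - u2)
      = ((p1 - p2) * (u3 - u2) - (p3 - p2) * (u1 - u2)) / ((u1 - u2) * (u3 - u2)) := by
    field_simp; ring
  rw [e12, e13, div_div_eq_mul_div, div_div_eq_mul_div]
  generalize hD : (p1 - p3) * (u2 - u3) - (p2 - p3) * (u1 - u3) = D at s12'
  have hneg : (p1 - p2) * (u3 - u2) - (p3 - p2) * (u1 - u2) = -D := by rw [← hD]; ring
  rw [hneg]
  field_simp
  rw [← hD]
  ring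

theorem IV_3D_consistency (p1 p2 p3 u1 u2 u3 : ℂ)
    (h12 : u1 ≠ u2) (h13 : u1 ≠ u3) (h23 : u2 ≠ u3)
    (u1₂ u1₃ u2₁ u2₃ u3₁ u3₂ : ℂ)
    (hu1₂ : u1₂ = (p1 - p2) / (u1 - u2) - u2)
    (hu2₁ : u2₁ = (p2 - p1) / (u2 - u1) - u1)
    (hu1₃ : u1₃ = (p1 - p3) / (u1 - u3) - u3)
    (hu3₁ : u3₁ = (p3 - p1) / (u3 - u1) - u1)
    (hu2₃ : u2₃ = (p2 - p3) / (u2 - u3) - u3)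
    (hu3₂ : u3₂ = (p3 - p2) / (u3 - u2) - u2)
    (h12s : u1₃ ≠ u2₃) (h13s : u1₂ ≠ u3₂) (h23s : u2₁ ≠ u3₁) :
    (p1 - p2) / (u1₃ - u2₃) - u2₃ = (p1 - p3) / (u1₂ - u3₂) - u3₂ ∧
    (p2 - p1) / (u2₃ - u1₃) - u1₃ = (p2 - p3) / (u2₁ - u3₁) - u3₁ ∧
    (p3 - p1) / (u3₂ - u1₂) - u1₂ = (p3 - p2) / (u3₁ - u2₁) - u2₁ := by
  subst hu1₂ hu2₁ hu1₃ hu3₁ hu2₃ hu3₂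
  exact ⟨IV_key p1 p2 p3 u1 u2 u3 h13 h23 h12 h23.symm h12s h13s,
         IV_key p2 p1 p3 u2 u1 u3 h23 h13 h12.symm h13.symm h12s.symm h23s,
         IV_key p3 p1 p2 u3 u1 u2 h23.symm h12 h13.symm h12.symm h13s.symm h23s.symm⟩
end

section
/- Tetrahedron-type formula for the z-potential of G1: let u¹, u², u³ ∈ ℂ and p¹, p², p³ ∈ ℂ with D := p¹(u²-u³) + p²(u³-u¹) + p³(u¹-u²) ≠ 0, and suppose all quantities below are defined via the I_V system (uⁱ_j + uʲ = (pⁱ-pʲ)/(uⁱ-uʲ)) and the potential relations (uⁱ)² - pⁱ = z_i + z on every edge of the unit cube (with compatible shifts). Then z₁₂₃ + z = [p¹u¹(u²-u³) + p²u²(u³-u¹) + p³u³(u¹-u²)]²/D² + [u¹(p²-p³)(p²+p³-p¹) + u²(p³-p¹)(p¹+p³-p²) + u³(p¹-p²)(p¹+p²-p³)]/D. -/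
set_option maxHeartbeats 2000000 in
theorem G1_z_tetrahedron_formula (p1 p2 p3 u1 u2 u3 : ℂ)
    (h12 : u1 ≠ u2) (h13 : u1 ≠ u3) (h23 : u2 ≠ u3)
    (hD : p1 * (u2 - u3) + p2 * (u3 - u1) + p3 * (u1 - u2) ≠ 0)
    (u1₂ u1₃ u2₁ u2₃ u3₁ u3₂ u1₂₃ u2₁₃ u3₁₂ : ℂ)
    -- I_V system on the bottom faces
    (hu1₂ : u1₂ + u2 = (p1 - p2) / (u1 - u2))
    (hu2₁ : u2₁ + u1 = (p2 - p1) / (u2 - u1))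
    (hu1₃ : u1₃ + u3 = (p1 - p3) / (u1 - u3))
    (hu3₁ : u3₁ + u1 = (p3 - p1) / (u3 - u1))
    (hu2₃ : u2₃ + u3 = (p2 - p3) / (u2 - u3))
    (hu3₂ : u3₂ + u2 = (p3 - p2) / (u3 - u2))
    (h12s : u1₃ ≠ u2₃) (h13s : u1₂ ≠ u3₂) (h23s : u2₁ ≠ u3₁)
    -- I_V system on the shifted faces
    (hu1₂₃ : u1₂₃ + u2₃ = (p1 - p2) / (u1₃ - u2₃))
    (hu1₃₂ : u1₂₃ + u3₂ = (p1 - p3) / (u1₂ - u3₂))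
    (hu2₁₃ : u2₁₃ + u1₃ = (p2 - p1) / (u2₃ - u1₃))
    (hu2₃₁ : u2₁₃ + u3₁ = (p2 - p3) / (u2₁ - u3₁))
    (hu3₁₂ : u3₁₂ + u1₂ = (p3 - p1) / (u3₂ - u1₂))
    (hu3₂₁ : u3₁₂ + u2₁ = (p3 - p2) / (u3₁ - u2₁))
    (z z1 z2 z3 z12 z13 z23 z123 : ℂ)
    -- potential relations on all twelve edges of the unit cube
    (hz1 : u1 ^ 2 - p1 = z1 + z) (hz12 : u1₂ ^ 2 - p1 = z12 + z2)
    (hz13 : u1₃ ^ 2 - p1 = z13 + z3) (hz123 : u1₂₃ ^ 2 - p1 = z123 + z23)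
    (hz2 : u2 ^ 2 - p2 = z2 + z) (hz21 : u2₁ ^ 2 - p2 = z12 + z1)
    (hz23 : u2₃ ^ 2 - p2 = z23 + z3) (hz213 : u2₁₃ ^ 2 - p2 = z123 + z13)
    (hz3 : u3 ^ 2 - p3 = z3 + z) (hz31 : u3₁ ^ 2 - p3 = z13 + z1)
    (hz32 : u3₂ ^ 2 - p3 = z23 + z2) (hz312 : u3₁₂ ^ 2 - p3 = z123 + z12) :
    z123 + z =
      (p1 * u1 * (u2 - u3) + p2 * u2 * (u3 - u1) + p3 * u3 * (u1 - u2)) ^ 2 /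
        (p1 * (u2 - u3) + p2 * (u3 - u1) + p3 * (u1 - u2)) ^ 2 +
      (u1 * (p2 - p3) * (p2 + p3 - p1) + u2 * (p3 - p1) * (p1 + p3 - p2) +
          u3 * (p1 - p2) * (p1 + p2 - p3)) /
        (p1 * (u2 - u3) + p2 * (u3 - u1) + p3 * (u1 - u2)) := by
  have hd13 : u1 - u3 ≠ 0 := sub_ne_zero.mpr h13
  have hd23 : u2 - u3 ≠ 0 := sub_ne_zero.mpr h23
  have key : z123 + z = u1₂₃ ^ 2 - u2₃ ^ 2 + u3 ^ 2 - p1 + p2 - p3 := by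
    linear_combination -hz123 + hz23 - hz3
  have e13 : u1₃ = (p1 - p3) / (u1 - u3) - u3 := by linear_combination hu1₃
  have e23 : u2₃ = (p2 - p3) / (u2 - u3) - u3 := by linear_combination hu2₃
  have hsub : u1₃ - u2₃ =
      (p1 * (u2 - u3) + p2 * (u3 - u1) + p3 * (u1 - u2)) / ((u1 - u3) * (u2 - u3)) := by
    rw [e13, e23]
    field_simp
    ring
  have e123 : u1₂₃ =
      (p1 - p2) * ((u1 - u3) * (u2 - u3)) /
        (p1 * (u2 - u3) + p2 * (u3 - u1) + p3 * (u1 - u2)) - u2₃ := by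
    have := hu1₂₃
    rw [hsub, div_div_eq_mul_div] at this
    linear_combination this
  rw [key, e123, e23]
  field_simp
  ring
end
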